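/- Let (X, μ) be a probability space and ρ a measurable semimetric on X with ∫∫_{X×X} ρ d(μ×μ) < ε²/2 for some ε > 0. Then ℍ_ε(X, μ, ρ) = 0, i.e., there exists a measurable set X₀ with μ(X₀) < ε such that the complement X \ X₀ has ρ-diameter less than ε. -/

import Mathlib

open MeasureTheory

/-- If ρ is a measurable semimetric on a probability space (X, μ) with
∫∫ ρ d(μ×μ) < ε²/2, then ℍ_ε(X, μ, ρ) = 0: there is a measurable set X₀ with
μ(X₀) < ε whose complement has ρ-diameter less than ε. -/
theorem entropy_zero_of_small_integral {X : Type*} [MeasurableSpace X]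
    (μ : Measure X) [IsProbabilityMeasure μ]
    (ρ : X → X → ℝ)
    (hρm : Measurable (Function.uncurry ρ))
    (hρnn : ∀ x y, 0 ≤ ρ x y)
    (hρs : ∀ x y, ρ x y = ρ y x)
    (hρ0 : ∀ x, ρ x x = 0)
    (hρt : ∀ x y z, ρ x z ≤ ρ x y + ρ y z)
    (ε : ℝ) (hε : 0 < ε)
    (hint : ∫⁻ p : X × X, ENNReal.ofReal (ρ p.1 p.2) ∂(μ.prod μ) <
      ENNReal.ofReal (ε ^ 2 / 2)) :
    ∃ X₀ : Set X, MeasurableSet X₀ ∧ μ X₀ < ENNReal.ofReal ε ∧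
      ∀ x ∈ X₀ᶜ, ∀ y ∈ X₀ᶜ, ρ x y < ε := by
  set F : X × X → ENNReal := fun p => ENNReal.ofReal (ρ p.1 p.2) with hF
  have hFm : Measurable F := hρm.ennreal_ofReal
  set g : X → ENNReal := fun x => ∫⁻ y, F (x, y) ∂μ with hg
  have hgm : Measurable g := hFm.lintegral_prod_right'
  set c : ENNReal := ENNReal.ofReal (ε / 2) with hc
  have hc0 : c ≠ 0 := by
    simp [hc, ENNReal.ofReal_eq_zero, not_le]
    linarith
  have hctop : c ≠ ⊤ := ENNReal.ofReal_ne_top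
  refine ⟨{x | c ≤ g x}, measurableSet_le measurable_const hgm, ?_, ?_⟩
  · -- Markov
    have hmarkov : c * μ {x | c ≤ g x} ≤ ∫⁻ x, g x ∂μ :=
      mul_meas_ge_le_lintegral₀ hgm.aemeasurable c
    have htonelli : ∫⁻ x, g x ∂μ = ∫⁻ p : X × X, F p ∂(μ.prod μ) :=
      (lintegral_prod F hFm.aemeasurable).symm
    have h1 : c * μ {x | c ≤ g x} < ENNReal.ofReal (ε ^ 2 / 2) :=
      lt_of_le_of_lt (htonelli ▸ hmarkov) hint
    have h2 : ENNReal.ofReal (ε ^ 2 / 2) = c * ENNReal.ofReal ε := by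
      rw [hc, ← ENNReal.ofReal_mul (by linarith)]
      ring_nf
    rw [h2] at h1
    exact (ENNReal.mul_lt_mul_iff_right hc0 hctop).mp h1
  · intro x hx y hy
    simp only [Set.mem_compl_iff, Set.mem_setOf_eq, not_le] at hx hy
    have key : ENNReal.ofReal (ρ x y) ≤ g x + g y := by
      have h1 : ENNReal.ofReal (ρ x y) = ∫⁻ _ : X, ENNReal.ofReal (ρ x y) ∂μ := by
        simp
      rw [h1]
      calc ∫⁻ _ : X, ENNReal.ofReal (ρ x y) ∂μ
          ≤ ∫⁻ z, (F (x, z) + F (y, z)) ∂μ := lintegral_mono fun z => ?_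
        _ = g x + g y := by
            rw [lintegral_add_left (f := fun z => F (x, z)) (hFm.comp measurable_prodMk_left)]
      have : ρ x y ≤ ρ x z + ρ z y := hρt x z y
      calc ENNReal.ofReal (ρ x y) ≤ ENNReal.ofReal (ρ x z + ρ z y) :=
            ENNReal.ofReal_le_ofReal this
        _ = ENNReal.ofReal (ρ x z) + ENNReal.ofReal (ρ z y) :=
            ENNReal.ofReal_add (hρnn _ _) (hρnn _ _)
        _ = F (x, z) + F (y, z) := by simp [hF, hρs z y]
    have hlt : ENNReal.ofReal (ρ x y) < c + c := lt_of_le_of_lt key (ENNReal.add_lt_add hx hy)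
    have : c + c = ENNReal.ofReal ε := by
      rw [hc, ← ENNReal.ofReal_add (by linarith) (by linarith)]
      ring_nf
    rw [this] at hlt
    exact lt_of_lt_of_le (ENNReal.ofReal_lt_ofReal_iff hε |>.mp hlt) le_rfl
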